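/- Suppose x : ℕ → ℝ is a sequence of per-step seat indicators (values in {0,1}) for a person whose running average is pushed toward a target s ∈ [0,1] by a greedy rule: whenever the running average at step t is below s, x(t+1) = 1, and whenever it is above s, x(t+1) = 0. Then the running averages (1/t)·Σ_{i<t} x(i) converge to s. -/

import Mathlib

open Filter

/-- If a 0/1 sequence `x` is driven by a greedy rule — whenever the
running average at step `t ≥ 1` is below a target `s ∈ [0,1]` the next value is 1,
and whenever it is above `s` the next value is 0 — then the running averages
converge to `s`. -/
theorem greedy_running_average_tendsto
    (x : ℕ → ℝ) (s : ℝ)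
    (hx : ∀ i, x i = 0 ∨ x i = 1)
    (hs0 : 0 ≤ s) (hs1 : s ≤ 1)
    (hgreedy : ∀ t : ℕ, 1 ≤ t →
      ((∑ i ∈ Finset.range t, x i) / (t : ℝ) < s → x t = 1) ∧
      ((∑ i ∈ Finset.range t, x i) / (t : ℝ) > s → x t = 0)) :
    Tendsto (fun t : ℕ => (∑ i ∈ Finset.range t, x i) / (t : ℝ)) atTop (nhds s) := by
  set S : ℕ → ℝ := fun t => ∑ i ∈ Finset.range t, x i with hS
  have key : ∀ t : ℕ, 1 ≤ t → |S t - s * t| ≤ 1 := by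
    intro t ht
    induction t with
    | zero => omega
    | succ n ih =>
      rcases Nat.lt_or_ge n 1 with h1 | hn
      · have hn0 : n = 0 := by omega
        subst hn0
        have : S 1 = x 0 := by simp [hS]
        rw [this]
        rcases hx 0 with h | h <;> rw [h, abs_le] <;> push_cast <;>
          constructor <;> nlinarith
      · have ih' := ih hn
        rw [abs_le] at ih'
        have hnpos : (0:ℝ) < n := by exact_mod_cast hn
        have hSsucc : S (n+1) = S n + x n := by
          simp [hS, Finset.sum_range_succ]
        have hg := hgreedy n hn
        rw [abs_le]
        push_cast
        rcases lt_trichotomy (S n / n) s with h | h | h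
        · have hx1 := hg.1 h
          have hd : S n < s * n := by
            rw [div_lt_iff₀ hnpos] at h; linarith
          rw [hSsucc, hx1]
          constructor <;> nlinarith
        · have hd : S n = s * n := by
            field_simp at h; linarith
          rw [hSsucc]
          rcases hx n with h' | h' <;> rw [h'] <;> constructor <;> nlinarith
        · have hx0 := hg.2 h
          have hd : s * n < S n := by
            rw [lt_div_iff₀ hnpos] at h; linarith
          rw [hSsucc, hx0]
          constructor <;> nlinarith
  have h0 : Tendsto (fun t : ℕ => (fun t : ℕ => S t / t) t - s) atTop (nhds 0) := by
    refine squeeze_zero_norm' (a := fun t : ℕ => 1 / (t : ℝ)) ?_ tendsto_one_div_atTop_nhds_zero_nat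
    filter_upwards [eventually_ge_atTop 1] with t ht
    have hnpos : (0:ℝ) < t := by exact_mod_cast ht
    have : S t / t - s = (S t - s * t) / t := by field_simp
    rw [Real.norm_eq_abs, this, abs_div, abs_of_pos hnpos, div_le_div_iff₀ hnpos hnpos]
    nlinarith [key t ht]
  have := h0.add (tendsto_const_nhds : Tendsto (fun _ : ℕ => s) atTop (nhds s))
  simpa using this
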